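/- Assume Assumption 1 holds, suppose ⟨C, Ψ_l⟩_𝒮 ≠ 0 for infinitely many l, and let (n(j))_{j≥1} and (k(j))_{j≥1} be increasing sequences of positive integers such that ‖C − P_{k(j)}(C)‖_𝒮 > 2δ_{n(j)} for all sufficiently large j. Then with probability 1, for all sufficiently large j one has ι(Ĉ_{n(j)}, δ_{n(j)}) > k(j). -/
import Mathlib


open MeasureTheory Filter
open scoped RealInnerProductSpace

variable {𝒮 : Type*} [NormedAddCommGroup 𝒮] [InnerProductSpace ℝ 𝒮]

/-- `P_j(S) = ∑_{l=1}^{j} ⟨S, Ψ_l⟩ Ψ_l`, the orthogonal projection of `S` onto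
`W_j = span {Ψ_1, …, Ψ_j}` (indices `0, …, j-1` in `0`-indexed notation). -/
noncomputable def basisProj (Ψ : HilbertBasis ℕ ℝ 𝒮) (j : ℕ) (S : 𝒮) : 𝒮 :=
  ∑ l ∈ Finset.range j, ⟪S, Ψ l⟫ • Ψ l


lemma basisProj_inner_orth (Ψ : HilbertBasis ℕ ℝ 𝒮) (j : ℕ) (S : 𝒮) {l : ℕ} (hl : l < j) :
    ⟪S - basisProj Ψ j S, Ψ l⟫ = 0 := by
  have horth := orthonormal_iff_ite.mp Ψ.orthonormal
  simp only [basisProj, inner_sub_left, sum_inner, real_inner_smul_left]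
  rw [Finset.sum_eq_single l]
  · rw [horth l l]; simp
  · intro b _ hb; rw [horth b l]; simp [hb]
  · intro h; exact absurd (Finset.mem_range.mpr hl) h

lemma inner_resid_basisProj (Ψ : HilbertBasis ℕ ℝ 𝒮) (S S' : 𝒮) {j kk : ℕ} (h : j ≤ kk) :
    ⟪S - basisProj Ψ kk S, basisProj Ψ j S'⟫ = 0 := by
  have hrfl : basisProj Ψ j S' = ∑ l ∈ Finset.range j, ⟪S', Ψ l⟫ • Ψ l := rfl
  rw [hrfl, inner_sum]
  apply Finset.sum_eq_zero
  intro l hl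
  rw [real_inner_smul_right]
  rw [basisProj_inner_orth Ψ kk S (lt_of_lt_of_le (Finset.mem_range.mp hl) h)]
  ring

lemma norm_sub_basisProj_anti (Ψ : HilbertBasis ℕ ℝ 𝒮) (S : 𝒮) {m kk : ℕ} (h : m ≤ kk) :
    ‖S - basisProj Ψ kk S‖ ≤ ‖S - basisProj Ψ m S‖ := by
  set T := S - basisProj Ψ kk S with hT
  set D := basisProj Ψ kk S - basisProj Ψ m S with hD
  have hsum : S - basisProj Ψ m S = T + D := by rw [hT, hD]; abel
  have hi : ⟪T, D⟫ = 0 := by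
    rw [hD, inner_sub_right, inner_resid_basisProj Ψ S S (le_refl kk),
      inner_resid_basisProj Ψ S S h]
    ring
  have hpy : ‖T + D‖ ^ 2 = ‖T‖ ^ 2 + ‖D‖ ^ 2 := by
    rw [norm_add_sq_real, hi]; ring
  rw [hsum]
  nlinarith [norm_nonneg T, norm_nonneg D, norm_nonneg (T + D)]

lemma norm_sub_basisProj_le (Ψ : HilbertBasis ℕ ℝ 𝒮) (S : 𝒮) (j : ℕ) :
    ‖S - basisProj Ψ j S‖ ≤ ‖S‖ := by
  have := norm_sub_basisProj_anti Ψ S (Nat.zero_le j)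
  simpa [basisProj] using this

lemma basisProj_sub (Ψ : HilbertBasis ℕ ℝ 𝒮) (j : ℕ) (A B : 𝒮) :
    basisProj Ψ j (A - B) = basisProj Ψ j A - basisProj Ψ j B := by
  simp [basisProj, inner_sub_left, sub_smul, Finset.sum_sub_distrib]

lemma basisProj_tendsto (Ψ : HilbertBasis ℕ ℝ 𝒮) (S : 𝒮) :
    Tendsto (fun j => basisProj Ψ j S) atTop (nhds S) := by
  have h := Ψ.hasSum_repr S
  have h2 : HasSum (fun i => ⟪S, Ψ i⟫ • Ψ i) S := by
    convert h using 2 with i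
    rw [Ψ.repr_apply_apply, real_inner_comm]
  exact h2.tendsto_sum_nat

/-- `W_j = span {Ψ_1, …, Ψ_j}` (i.e. the span of `Ψ 0, …, Ψ (j-1)`). -/
def basisSpan (Ψ : HilbertBasis ℕ ℝ 𝒮) (j : ℕ) : Submodule ℝ 𝒮 :=
  Submodule.span ℝ ((fun l => Ψ l) '' Set.Iio j)

/-- `ι(S, δ) = min {j ≥ 1 : ‖S - P_j(S)‖_𝒮 < δ}`. -/
noncomputable def iotaDim (Ψ : HilbertBasis ℕ ℝ 𝒮) (S : 𝒮) (δ : ℝ) : ℕ :=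
  sInf {j | 1 ≤ j ∧ ‖S - basisProj Ψ j S‖ < δ}

/-- Under Assumption 1, if `⟨C, Ψ_l⟩ ≠ 0` for infinitely many `l` and the
update times `n(j)` and thresholds `k(j)` satisfy `‖C - P_{k(j)}(C)‖ > 2 δ_{n(j)}` for all
sufficiently large `j`, then almost surely `ι(Ĉ_{n(j)}, δ_{n(j)}) > k(j)` for all sufficiently
large `j`. -/
theorem infinite_expansion_detection_along_subsequence
    {𝒮 : Type*} [NormedAddCommGroup 𝒮] [InnerProductSpace ℝ 𝒮]
    {Ω : Type*} [MeasurableSpace Ω] (ℙ : Measure Ω) [IsProbabilityMeasure ℙ]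
    [MeasurableSpace 𝒮] [BorelSpace 𝒮]
    (Ψ : HilbertBasis ℕ ℝ 𝒮)
    (Chat : ℕ → Ω → 𝒮) (hChat : ∀ n, Measurable (Chat n))
    (C : 𝒮)
    (R : ℕ → ℝ) (hRpos : ∀ n, 0 < R n) (hRanti : StrictAnti R)
    (hRlim : Tendsto R atTop (nhds 0))
    (hrate : ∀ᵐ ω ∂ℙ, ∀ᶠ n in atTop, ‖Chat n ω - C‖ < R n)
    (ε : ℝ) (hε : 0 < ε) (δ : ℕ → ℝ) (hδ : ∀ n, δ n = (1 + ε) * R n)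
    (hinf : {l : ℕ | ⟪C, Ψ l⟫ ≠ 0}.Infinite)
    (n k : ℕ → ℕ) (hn : StrictMono n) (hk : StrictMono k)
    (hn1 : ∀ j, 1 ≤ n j) (hk1 : ∀ j, 1 ≤ k j)
    (hsep : ∀ᶠ j in atTop, 2 * δ (n j) < ‖C - basisProj Ψ (k j) C‖) :
    ∀ᵐ ω ∂ℙ, ∀ᶠ j in atTop, k j < iotaDim Ψ (Chat (n j) ω) (δ (n j)) := by
  obtain ⟨J, hJ⟩ := eventually_atTop.mp hsep
  filter_upwards [hrate] with ω hω
  obtain ⟨N, hN⟩ := eventually_atTop.mp hω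
  rw [eventually_atTop]
  refine ⟨max N J, fun j hj => ?_⟩
  have hjN : N ≤ j := le_trans (le_max_left _ _) hj
  have hjJ : J ≤ j := le_trans (le_max_right _ _) hj
  set S := Chat (n j) ω with hS
  set d := δ (n j) with hd
  have hRd : R (n j) < d := by
    rw [hd, hδ]; nlinarith [hRpos (n j)]
  have hdpos : 0 < d := lt_trans (hRpos _) hRd
  have hclose : ‖S - C‖ < R (n j) := hN (n j) (le_trans hjN hn.le_apply)
  have hsepj : 2 * d < ‖C - basisProj Ψ (k j) C‖ := hJ j hjJ
  -- the defining set of iotaDim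
  set A : Set ℕ := {m | 1 ≤ m ∧ ‖S - basisProj Ψ m S‖ < d} with hA
  -- every element of A exceeds k j
  have hbig : ∀ m ∈ A, k j < m := by
    intro m hm
    by_contra hle
    push_neg at hle
    have h1 : ‖C - basisProj Ψ (k j) C‖ ≤ ‖C - basisProj Ψ m C‖ :=
      norm_sub_basisProj_anti Ψ C hle
    have h2 : C - basisProj Ψ m C
        = (S - basisProj Ψ m S) + ((C - S) - basisProj Ψ m (C - S)) := by
      rw [basisProj_sub]; abel
    have h3 : ‖(C - S) - basisProj Ψ m (C - S)‖ ≤ ‖C - S‖ :=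
      norm_sub_basisProj_le Ψ (C - S) m
    have h4 : ‖C - S‖ < R (n j) := by rwa [norm_sub_rev]
    have h5 : ‖C - basisProj Ψ m C‖
        ≤ ‖S - basisProj Ψ m S‖ + ‖(C - S) - basisProj Ψ m (C - S)‖ := by
      rw [h2]; exact norm_add_le _ _
    have hmA := hm.2
    nlinarith
  -- A is nonempty
  have hne : A.Nonempty := by
    have ht := basisProj_tendsto Ψ S
    have := (Metric.tendsto_atTop.mp ht) d hdpos
    obtain ⟨M, hM⟩ := this
    refine ⟨max M 1, le_max_right _ _, ?_⟩
    have := hM (max M 1) (le_max_left _ _)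
    rwa [dist_eq_norm, norm_sub_rev] at this
  have hmem : sInf A ∈ A := Nat.sInf_mem hne
  exact hbig _ hmem
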